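/- Define R(t) = √(1 − 4t), r(t) = R(t)/2, and h(t) = R(t) for t ∈ [0, 1/4). Then these C¹ functions satisfy, for all t ∈ [0, 1/4): R′(t) = −1/R(t) − 1/h(t), r′(t) = −1/r(t) + 1/h(t), and h′(t) = −(R(t) + r(t))/(R(t)² − r(t)²); moreover 0 < r(t) < R(t) and h(t) > 0 throughout, R(0) = 1, r(0) = 1/2, h(0) = 1, and R(t) → 0 as t → (1/4)⁻. -/

import Mathlib

lemma sqrt_one_sub_hasDerivAt {t : ℝ} (ht : t < 1/4) :
    HasDerivAt (fun s => Real.sqrt (1 - 4 * s)) (-2 / Real.sqrt (1 - 4 * t)) t := by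
  have hpos : 0 < 1 - 4 * t := by linarith
  have h1 : HasDerivAt (fun s : ℝ => 1 - 4 * s) (-4) t := by
    simpa using ((hasDerivAt_id t).const_mul (4:ℝ)).const_sub 1
  have h2 := (Real.hasDerivAt_sqrt (ne_of_gt hpos)).comp t h1
  refine h2.congr_deriv ?_
  have hs : Real.sqrt (1 - 4 * t) ≠ 0 := by positivity
  field_simp
  ring

/-- The functions `R(t) = √(1−4t)`, `r = R/2`, `h = R` solve the torus ODE system for
`n = 3`, `μ = 1/2` on `[0, 1/4)`, with `0 < r < R`, `h > 0`, the stated initial data,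
and `R(t) → 0` as `t → (1/4)⁻`: the self-similar crystalline shrinking doughnut. -/
theorem shrinking_doughnut_ode
    (R r h : ℝ → ℝ)
    (hRdef : ∀ t, R t = Real.sqrt (1 - 4 * t))
    (hrdef : ∀ t, r t = R t / 2)
    (hhdef : ∀ t, h t = R t) :
    ContDiffOn ℝ 1 R (Set.Ico 0 (1/4)) ∧
    ContDiffOn ℝ 1 r (Set.Ico 0 (1/4)) ∧
    ContDiffOn ℝ 1 h (Set.Ico 0 (1/4)) ∧
    (∀ t ∈ Set.Ico (0:ℝ) (1/4),
      HasDerivAt R (-1 / R t - 1 / h t) t ∧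
      HasDerivAt r (-1 / r t + 1 / h t) t ∧
      HasDerivAt h (-(R t + r t) / (R t ^ 2 - r t ^ 2)) t ∧
      0 < r t ∧ r t < R t ∧ 0 < h t) ∧
    R 0 = 1 ∧ r 0 = 1/2 ∧ h 0 = 1 ∧
    Filter.Tendsto R (nhdsWithin (1/4) (Set.Iio (1/4))) (nhds 0) := by
  have hRfun : R = fun s => Real.sqrt (1 - 4 * s) := funext hRdef
  have hRcd : ContDiffOn ℝ 1 R (Set.Ico 0 (1/4)) := by
    intro t ht
    apply ContDiffAt.contDiffWithinAt
    rw [hRfun]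
    have hpos : (0:ℝ) < 1 - 4 * t := by
      have := ht.2; linarith
    exact (Real.contDiffAt_sqrt (ne_of_gt hpos)).comp t
      ((contDiff_const.sub (contDiff_const.mul contDiff_id)).contDiffAt)
  have hrfun : r = fun s => R s / 2 := funext hrdef
  have hhfun : h = R := funext hhdef
  have hrcd : ContDiffOn ℝ 1 r (Set.Ico 0 (1/4)) := by
    rw [hrfun]; exact hRcd.div_const 2
  refine ⟨hRcd, hrcd, hhfun ▸ hRcd, ?_, ?_, ?_, ?_, ?_⟩
  · intro t ht
    obtain ⟨ht0, ht1⟩ := ht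
    have hpos : (0:ℝ) < 1 - 4 * t := by linarith
    have hRpos : 0 < R t := by rw [hRdef]; positivity
    have hRD : HasDerivAt R (-2 / R t) t := by
      rw [hRdef t, hRfun]; exact sqrt_one_sub_hasDerivAt ht1
    have hRne : R t ≠ 0 := ne_of_gt hRpos
    refine ⟨?_, ?_, ?_, ?_, ?_, ?_⟩
    · convert hRD using 1
      rw [hhdef]; field_simp; ring
    · have : HasDerivAt r (-2 / R t / 2) t := by
        rw [hrfun]; exact hRD.div_const 2
      convert this using 1
      rw [hrdef, hhdef]; field_simp; ring
    · have : HasDerivAt h (-2 / R t) t := by rw [hhfun]; exact hRD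
      convert this using 1
      rw [hrdef]
      have he1 : R t ^ 2 - (R t / 2) ^ 2 = 3 / 4 * (R t * R t) := by ring
      rw [he1, div_eq_div_iff (by positivity) hRne]
      ring
    · rw [hrdef]; positivity
    · rw [hrdef]; linarith
    · rw [hhdef]; exact hRpos
  · rw [hRdef]; norm_num
  · rw [hrdef, hRdef]; norm_num
  · rw [hhdef, hRdef]; norm_num
  · rw [hRfun]
    have : Continuous (fun s : ℝ => Real.sqrt (1 - 4 * s)) :=
      Real.continuous_sqrt.comp (continuous_const.sub (continuous_const.mul continuous_id))
    have h0 : Real.sqrt (1 - 4 * (1/4 : ℝ)) = 0 := by norm_num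
    exact h0 ▸ (this.continuousAt.continuousWithinAt.tendsto)
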